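/- Let X be a real Banach space, D ⊆ ℝᵐ a nonempty open convex set, and Ψ : D → X Fréchet differentiable with ‖Ψ'(p) − Ψ'(q)‖ ≤ C_L ‖p − q‖ for all p, q ∈ D. Let p, p† ∈ D and let B : X → ℝᵐ be a continuous linear map with B ∘ Ψ'(p) = id on ℝᵐ and ‖B‖ ≤ C_I. Then the Gauss–Newton step p⁺ := p − B(Ψ(p) − Ψ(p†)) satisfies ‖p⁺ − p†‖ ≤ (C_I C_L / 2) ‖p − p†‖². -/

import Mathlib

lemma taylor_quadratic {X : Type*} [NormedAddCommGroup X] [NormedSpace ℝ X] [CompleteSpace X]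
    {m : ℕ} (D : Set (EuclideanSpace ℝ (Fin m)))
    (hDconv : Convex ℝ D)
    (Ψ : EuclideanSpace ℝ (Fin m) → X)
    (Ψ' : EuclideanSpace ℝ (Fin m) → (EuclideanSpace ℝ (Fin m) →L[ℝ] X))
    (hderiv : ∀ p ∈ D, HasFDerivAt Ψ (Ψ' p) p)
    (C_L : ℝ) (hCL : 0 ≤ C_L)
    (hLip : ∀ p ∈ D, ∀ q ∈ D, ‖Ψ' p - Ψ' q‖ ≤ C_L * ‖p - q‖)
    (p pdag : EuclideanSpace ℝ (Fin m)) (hp : p ∈ D) (hpdag : pdag ∈ D) :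
    ‖Ψ pdag - Ψ p - Ψ' p (pdag - p)‖ ≤ C_L / 2 * ‖pdag - p‖ ^ 2 := by
  set v := pdag - p with hv
  have hmem : ∀ t ∈ Set.Icc (0 : ℝ) 1, p + t • v ∈ D := fun t ht =>
    hDconv.add_smul_sub_mem hp hpdag ht
  set F : ℝ → X := fun t => Ψ' (p + t • v) v - Ψ' p v with hF
  set g : ℝ → X := fun t => Ψ (p + t • v) - t • (Ψ' p v) with hg
  have hgderiv : ∀ t ∈ Set.Icc (0 : ℝ) 1, HasDerivAt g (F t) t := by
    intro t ht
    have hin : HasDerivAt (fun s : ℝ => p + s • v) v t := by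
      simpa using ((hasDerivAt_id t).smul_const v).const_add p
    have h1 : HasDerivAt (fun s : ℝ => Ψ (p + s • v)) (Ψ' (p + t • v) v) t := by
      have := (hderiv _ (hmem t ht)).comp_hasDerivAt t hin
      exact this
    have h2 : HasDerivAt (fun s : ℝ => s • (Ψ' p v)) (Ψ' p v) t := by
      simpa using (hasDerivAt_id t).smul_const (Ψ' p v)
    exact h1.sub h2
  have hFcont : ContinuousOn F (Set.Icc (0 : ℝ) 1) := by
    have : LipschitzOnWith (Real.toNNReal (C_L * ‖v‖ ^ 2)) F (Set.Icc (0 : ℝ) 1) := by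
      apply LipschitzOnWith.of_dist_le' (fun t ht s hs => ?_)
      have : F t - F s = (Ψ' (p + t • v) - Ψ' (p + s • v)) v := by
        simp only [hF, ContinuousLinearMap.sub_apply]; abel
      rw [dist_eq_norm, this]
      calc ‖(Ψ' (p + t • v) - Ψ' (p + s • v)) v‖
          ≤ ‖Ψ' (p + t • v) - Ψ' (p + s • v)‖ * ‖v‖ :=
            (Ψ' (p + t • v) - Ψ' (p + s • v)).le_opNorm v
        _ ≤ (C_L * ‖(p + t • v) - (p + s • v)‖) * ‖v‖ := by
            gcongr; exact hLip _ (hmem t ht) _ (hmem s hs)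
        _ = C_L * ‖v‖ ^ 2 * dist t s := by
            have : (p + t • v) - (p + s • v) = (t - s) • v := by
              module
            rw [this, norm_smul, dist_eq_norm]
            simp only [Real.norm_eq_abs]; ring
    exact this.continuousOn
  have hFint : IntervalIntegrable F MeasureTheory.volume 0 1 := by
    apply ContinuousOn.intervalIntegrable
    simpa [Set.uIcc_of_le (by norm_num : (0:ℝ) ≤ 1)] using hFcont
  have hint : g 1 - g 0 = ∫ t in (0:ℝ)..1, F t :=
    (intervalIntegral.integral_eq_sub_of_hasDerivAt
      (fun t ht => hgderiv t (by simpa [Set.uIcc_of_le (by norm_num : (0:ℝ) ≤ 1)] using ht))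
      hFint).symm
  have hbound : ‖∫ t in (0:ℝ)..1, F t‖ ≤ |∫ t in (0:ℝ)..1, C_L * ‖v‖ ^ 2 * t| := by
    apply intervalIntegral.norm_integral_le_abs_of_norm_le _
      ((continuous_const.mul continuous_id).intervalIntegrable 0 1)
    filter_upwards [MeasureTheory.ae_restrict_mem measurableSet_uIoc] with t ht
    · rw [Set.uIoc_of_le (by norm_num : (0:ℝ) ≤ 1)] at ht
      calc ‖F t‖ = ‖(Ψ' (p + t • v) - Ψ' p) v‖ := by simp [hF]
        _ ≤ ‖Ψ' (p + t • v) - Ψ' p‖ * ‖v‖ := (Ψ' (p + t • v) - Ψ' p).le_opNorm v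
        _ ≤ (C_L * ‖(p + t • v) - p‖) * ‖v‖ := by
            gcongr
            exact hLip _ (hmem t ⟨ht.1.le, ht.2⟩) _ hp
        _ = C_L * ‖v‖ ^ 2 * t := by
            have : (p + t • v) - p = t • v := by module
            rw [this, norm_smul, Real.norm_eq_abs, abs_of_pos ht.1]; ring
  have hval : (∫ t in (0:ℝ)..1, C_L * ‖v‖ ^ 2 * t) = C_L / 2 * ‖v‖ ^ 2 := by
    rw [intervalIntegral.integral_const_mul, integral_id]
    ring
  have hgeq : g 1 - g 0 = Ψ pdag - Ψ p - Ψ' p v := by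
    simp [hg, hv]
    abel
  rw [← hgeq, hint]
  calc ‖∫ t in (0:ℝ)..1, F t‖ ≤ |∫ t in (0:ℝ)..1, C_L * ‖v‖ ^ 2 * t| := hbound
    _ = C_L / 2 * ‖v‖ ^ 2 := by
        rw [hval, abs_of_nonneg (by positivity)]

/-- the one-step Gauss–Newton contraction estimate: if `B` is a bounded
left inverse of `Ψ'(p)` with `‖B‖ ≤ C_I` and `Ψ'` is `C_L`-Lipschitz on a convex
open set `D`, then the Gauss–Newton step satisfies a quadratic error bound. -/
theorem stmt6 {X : Type*} [NormedAddCommGroup X] [NormedSpace ℝ X] [CompleteSpace X]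
    {m : ℕ} (D : Set (EuclideanSpace ℝ (Fin m)))
    (hDne : D.Nonempty) (hDo : IsOpen D) (hDconv : Convex ℝ D)
    (Ψ : EuclideanSpace ℝ (Fin m) → X)
    (Ψ' : EuclideanSpace ℝ (Fin m) → (EuclideanSpace ℝ (Fin m) →L[ℝ] X))
    (hderiv : ∀ p ∈ D, HasFDerivAt Ψ (Ψ' p) p)
    (C_L C_I : ℝ)
    (hLip : ∀ p ∈ D, ∀ q ∈ D, ‖Ψ' p - Ψ' q‖ ≤ C_L * ‖p - q‖)
    (p pdag : EuclideanSpace ℝ (Fin m)) (hp : p ∈ D) (hpdag : pdag ∈ D)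
    (B : X →L[ℝ] EuclideanSpace ℝ (Fin m))
    (hBleft : B.comp (Ψ' p) = ContinuousLinearMap.id ℝ (EuclideanSpace ℝ (Fin m)))
    (hB : ‖B‖ ≤ C_I) :
    ‖(p - B (Ψ p - Ψ pdag)) - pdag‖ ≤ C_I * C_L / 2 * ‖p - pdag‖ ^ 2 := by
  rcases eq_or_ne p pdag with h | h
  · subst h; simp
  · have hCL : 0 ≤ C_L := by
      have h1 := hLip p hp pdag hpdag
      have h2 : 0 < ‖p - pdag‖ := by
        rwa [norm_pos_iff, sub_ne_zero]
      nlinarith [norm_nonneg (Ψ' p - Ψ' pdag)]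
    have hkey := taylor_quadratic D hDconv Ψ Ψ' hderiv C_L hCL hLip p pdag hp hpdag
    have hBid : B (Ψ' p (p - pdag)) = p - pdag := by
      have := congrArg (fun L : EuclideanSpace ℝ (Fin m) →L[ℝ] EuclideanSpace ℝ (Fin m) =>
        L (p - pdag)) hBleft
      simpa using this
    have heq : (p - B (Ψ p - Ψ pdag)) - pdag = B (Ψ pdag - Ψ p - Ψ' p (pdag - p)) := by
      have : Ψ pdag - Ψ p - Ψ' p (pdag - p)
          = (Ψ' p (p - pdag)) - (Ψ p - Ψ pdag) := by
        have : Ψ' p (pdag - p) = - Ψ' p (p - pdag) := by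
          rw [← map_neg]; congr 1; abel
        rw [this]; abel
      rw [this, map_sub B ((Ψ' p) (p - pdag)) (Ψ p - Ψ pdag), hBid]
      abel
    rw [heq]
    calc ‖B (Ψ pdag - Ψ p - Ψ' p (pdag - p))‖
        ≤ ‖B‖ * ‖Ψ pdag - Ψ p - Ψ' p (pdag - p)‖ := B.le_opNorm _
      _ ≤ C_I * (C_L / 2 * ‖pdag - p‖ ^ 2) := by
          apply mul_le_mul hB hkey (norm_nonneg _) ((norm_nonneg B).trans hB)
      _ = C_I * C_L / 2 * ‖p - pdag‖ ^ 2 := by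
          rw [norm_sub_rev pdag p]; ring
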